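/- If ℓ ≥ 5, ℓ ≠ 61, and λ is a prime ideal of Z[(1+√13)/2] above ℓ containing −1 + √13 − 62 or −1 − √13 − 62, then ℓ divides N(−63 + √13) = 3956 = 2²·23·43 or N(−63 − √13), hence ℓ ∈ {23, 43}; moreover, checking the other congruence −3 ± 3√13 ≡ 68 mod λ, these are simultaneously impossible for ℓ ∈ {23,43} with the same λ — in particular the congruence −1 ± √13 ≡ 62 (mod λ) has no solution with ℓ ∉ {2, 23, 43}. -/

import Mathlib

open Polynomial

/-- The ring `ℤ[(1+√13)/2]`, with `ω = (1+√13)/2` satisfying `ω² = ω + 3`: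
the ring of integers of `ℚ(√13)`. -/
noncomputable abbrev Zom : Type := AdjoinRoot (X ^ 2 - X - 3 : ℤ[X])

/-- `ω = (1+√13)/2`. -/
noncomputable abbrev om : Zom := AdjoinRoot.root (X ^ 2 - X - 3 : ℤ[X])

/-- `√13 = 2ω − 1`. -/
noncomputable abbrev sqrt13 : Zom := 2 * om - 1

lemma hmonic13 : (X ^ 2 - X - 3 : ℤ[X]).Monic := by monicity!

lemma hdeg13 : (X ^ 2 - X - 3 : ℤ[X]).natDegree = 2 := by compute_degree!

lemma hom13 : om ^ 2 = om + 3 := by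
  have h : AdjoinRoot.mk (X ^ 2 - X - 3 : ℤ[X]) (X ^ 2 - X - 3 : ℤ[X]) = 0 :=
    AdjoinRoot.mk_self
  simp only [map_sub, map_pow, AdjoinRoot.mk_X, map_ofNat] at h
  linear_combination h

noncomputable def b13 : Module.Basis (Fin 2) ℤ Zom :=
  (AdjoinRoot.powerBasis' hmonic13).basis.reindex (finCongr hdeg13)

lemma b13_0 : b13 0 = 1 := by
  rw [b13, Module.Basis.reindex_apply, PowerBasis.basis_eq_pow]; exact pow_zero _

lemma b13_1 : b13 1 = om := by
  rw [b13, Module.Basis.reindex_apply, PowerBasis.basis_eq_pow]; exact pow_one _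

lemma norm_eq13 (x : Zom) (a b c d : ℤ) (h0 : x * 1 = (a : Zom) + (c : Zom) * om)
    (h1 : x * om = (b : Zom) + (d : Zom) * om) :
    Algebra.norm ℤ x = a * d - b * c := by
  have e0 : x * b13 0 = a • b13 0 + c • b13 1 := by
    rw [b13_0, b13_1]; simpa only [zsmul_eq_mul, mul_one] using h0
  have e1 : x * b13 1 = b • b13 0 + d • b13 1 := by
    rw [b13_0, b13_1]; simpa only [zsmul_eq_mul, mul_one] using h1
  rw [Algebra.norm_eq_matrix_det b13 x]
  have hM : Algebra.leftMulMatrix b13 x = !![a, b; c, d] := by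
    ext i j
    fin_cases i <;> fin_cases j <;>
      simp only [Fin.mk_zero, Fin.mk_one, Fin.isValue, Algebra.leftMulMatrix_eq_repr_mul,
        e0, e1, map_add, map_smul, Module.Basis.repr_self] <;>
      simp [Finsupp.single_apply]
  rw [hM, Matrix.det_fin_two_of]

lemma norm13_1 : Algebra.norm ℤ (-63 + sqrt13) = 3956 := by
  have := norm_eq13 (-63 + sqrt13) (-64) 6 2 (-62) (by push_cast; ring)
    (by push_cast; linear_combination (2 : Zom) * hom13)
  rw [this]; norm_num

lemma norm13_2 : Algebra.norm ℤ (-63 - sqrt13) = 3956 := by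
  have := norm_eq13 (-63 - sqrt13) (-62) (-6) (-2) (-64) (by push_cast; ring)
    (by push_cast; linear_combination (-2 : Zom) * hom13)
  rw [this]; norm_num

lemma key13 (lam : Ideal Zom) (hp : lam.IsPrime) (m n : ℤ) (h : Int.gcd m n = 1)
    (hm : ((m : ℤ) : Zom) ∈ lam) (hn : ((n : ℤ) : Zom) ∈ lam) : False := by
  obtain ⟨u, v, huv⟩ := Int.isCoprime_iff_gcd_eq_one.mpr h
  have h1 : (1 : Zom) ∈ lam := by
    have := lam.add_mem (lam.mul_mem_left ((u : ℤ) : Zom) hm)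
      (lam.mul_mem_left ((v : ℤ) : Zom) hn)
    rwa [show ((u:ℤ):Zom) * m + ((v:ℤ):Zom) * n = 1 by
      exact_mod_cast congrArg (fun z : ℤ => (z : Zom)) huv] at this
  exact hp.ne_top ((Ideal.eq_top_iff_one lam).mpr h1)

lemma keyNat13 (lam : Ideal Zom) (hp : lam.IsPrime) (ℓ p : ℕ) (hℓ : ℓ.Prime)
    (hp' : p.Prime) (hne : ℓ ≠ p) (h1 : (ℓ : Zom) ∈ lam) (h2 : ((p : ℤ) : Zom) ∈ lam) :
    False := by
  refine key13 lam hp ℓ p ?_ (by exact_mod_cast h1) h2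
  rw [Int.gcd_natCast_natCast]
  exact (Nat.coprime_primes hℓ hp').mpr hne

lemma hprod13 : (-1 + sqrt13 - 62) * (-1 - sqrt13 - 62) = ((3956 : ℤ) : Zom) := by
  push_cast
  linear_combination (-4 : Zom) * hom13

lemma mem3956 (lam : Ideal Zom) (hp : lam.IsPrime)
    (h : ((3956 : ℤ) : Zom) ∈ lam) :
    ((2:ℤ):Zom) ∈ lam ∨ ((23:ℤ):Zom) ∈ lam ∨ ((43:ℤ):Zom) ∈ lam := by
  have h' : ((2:ℤ):Zom) * (((2:ℤ):Zom) * (((23:ℤ):Zom) * ((43:ℤ):Zom))) ∈ lam := by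
    rw [show ((2:ℤ):Zom) * (((2:ℤ):Zom) * (((23:ℤ):Zom) * ((43:ℤ):Zom)))
        = ((3956:ℤ):Zom) by push_cast; norm_num]
    exact h
  rcases hp.mem_or_mem h' with h2 | h'
  · exact Or.inl h2
  rcases hp.mem_or_mem h' with h2 | h'
  · exact Or.inl h2
  rcases hp.mem_or_mem h' with h2 | h'
  · exact Or.inr (Or.inl h2)
  · exact Or.inr (Or.inr h')

lemma mem3956' (lam : Ideal Zom) (hp : lam.IsPrime)
    (hcong : (-1 + sqrt13 - 62 ∈ lam) ∨ (-1 - sqrt13 - 62 ∈ lam)) :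
    ((2:ℤ):Zom) ∈ lam ∨ ((23:ℤ):Zom) ∈ lam ∨ ((43:ℤ):Zom) ∈ lam := by
  refine mem3956 lam hp ?_
  rcases hcong with h | h
  · exact hprod13 ▸ lam.mul_mem_right _ h
  · exact hprod13 ▸ lam.mul_mem_left _ h

/-- `N(−63 ± √13) = 3956 = 2²·23·43`; if `ℓ ≥ 5` is a prime, `ℓ ≠ 61`, and `λ` is a
prime of `ℤ[(1+√13)/2]` above `ℓ` containing `−1 + √13 − 62` or `−1 − √13 − 62`, then
`ℓ ∈ {23, 43}` and the congruence `−3 ± 3√13 ≡ 68 (mod λ)` fails; in particular the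
congruence `−1 ± √13 ≡ 62 (mod λ)` has no solution with `ℓ ∉ {2, 23, 43}`. -/
theorem stmt13 :
    (Algebra.norm ℤ (-63 + sqrt13) = 3956) ∧
    (Algebra.norm ℤ (-63 - sqrt13) = 3956) ∧
    ((3956 : ℕ) = 2 ^ 2 * 23 * 43) ∧
    (∀ ℓ : ℕ, ℓ.Prime → 5 ≤ ℓ → ℓ ≠ 61 →
      ∀ lam : Ideal Zom, lam.IsPrime → (ℓ : Zom) ∈ lam →
        ((-1 + sqrt13 - 62 ∈ lam) ∨ (-1 - sqrt13 - 62 ∈ lam)) →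
        (ℓ = 23 ∨ ℓ = 43) ∧
          ¬((-3 + 3 * sqrt13 - 68 ∈ lam) ∨ (-3 - 3 * sqrt13 - 68 ∈ lam))) ∧
    (∀ ℓ : ℕ, ℓ.Prime → ℓ ∉ ({2, 23, 43} : Set ℕ) →
      ∀ lam : Ideal Zom, lam.IsPrime → (ℓ : Zom) ∈ lam →
        ¬((-1 + sqrt13 - 62 ∈ lam) ∨ (-1 - sqrt13 - 62 ∈ lam))) := by
  refine ⟨norm13_1, norm13_2, by norm_num, ?_, ?_⟩
  · intro ℓ hℓ h5 _h61 lam hlam hl hcong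
    have hcase : ℓ = 23 ∨ ℓ = 43 := by
      rcases mem3956' lam hlam hcong with h | h | h
      · exact (keyNat13 lam hlam ℓ 2 hℓ (by norm_num) (by omega) hl
          (by exact_mod_cast h)).elim
      · rcases eq_or_ne ℓ 23 with rfl | hne
        · exact Or.inl rfl
        · exact (keyNat13 lam hlam ℓ 23 hℓ (by norm_num) hne hl
            (by exact_mod_cast h)).elim
      · rcases eq_or_ne ℓ 43 with rfl | hne
        · exact Or.inr rfl
        · exact (keyNat13 lam hlam ℓ 43 hℓ (by norm_num) hne hl
            (by exact_mod_cast h)).elim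
    refine ⟨hcase, ?_⟩
    rintro (hA | hB)
    · rcases hcong with h1 | h2
      · have hm : ((-118 : ℤ) : Zom) ∈ lam := by
          have := lam.sub_mem (lam.mul_mem_left 3 h1) hA
          rwa [show (3:Zom) * (-1 + sqrt13 - 62) - (-3 + 3 * sqrt13 - 68)
              = ((-118:ℤ):Zom) by push_cast; ring] at this
        rcases hcase with rfl | rfl
        · exact key13 lam hlam 23 (-118) (by decide) (by exact_mod_cast hl) hm
        · exact key13 lam hlam 43 (-118) (by decide) (by exact_mod_cast hl) hm
      · have hm : ((-260 : ℤ) : Zom) ∈ lam := by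
          have := lam.add_mem (lam.mul_mem_left 3 h2) hA
          rwa [show (3:Zom) * (-1 - sqrt13 - 62) + (-3 + 3 * sqrt13 - 68)
              = ((-260:ℤ):Zom) by push_cast; ring] at this
        rcases hcase with rfl | rfl
        · exact key13 lam hlam 23 (-260) (by decide) (by exact_mod_cast hl) hm
        · exact key13 lam hlam 43 (-260) (by decide) (by exact_mod_cast hl) hm
    · rcases hcong with h1 | h2
      · have hm : ((-260 : ℤ) : Zom) ∈ lam := by
          have := lam.add_mem (lam.mul_mem_left 3 h1) hB
          rwa [show (3:Zom) * (-1 + sqrt13 - 62) + (-3 - 3 * sqrt13 - 68)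
              = ((-260:ℤ):Zom) by push_cast; ring] at this
        rcases hcase with rfl | rfl
        · exact key13 lam hlam 23 (-260) (by decide) (by exact_mod_cast hl) hm
        · exact key13 lam hlam 43 (-260) (by decide) (by exact_mod_cast hl) hm
      · have hm : ((-118 : ℤ) : Zom) ∈ lam := by
          have := lam.sub_mem (lam.mul_mem_left 3 h2) hB
          rwa [show (3:Zom) * (-1 - sqrt13 - 62) - (-3 - 3 * sqrt13 - 68)
              = ((-118:ℤ):Zom) by push_cast; ring] at this
        rcases hcase with rfl | rfl
        · exact key13 lam hlam 23 (-118) (by decide) (by exact_mod_cast hl) hm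
        · exact key13 lam hlam 43 (-118) (by decide) (by exact_mod_cast hl) hm
  · intro ℓ hℓ hnot lam hlam hl hcong
    simp only [Set.mem_insert_iff, Set.mem_singleton_iff, not_or] at hnot
    obtain ⟨hn2, hn23, hn43⟩ := hnot
    rcases mem3956' lam hlam hcong with h | h | h
    · exact keyNat13 lam hlam ℓ 2 hℓ (by norm_num) hn2 hl (by exact_mod_cast h)
    · exact keyNat13 lam hlam ℓ 23 hℓ (by norm_num) hn23 hl (by exact_mod_cast h)
    · exact keyNat13 lam hlam ℓ 43 hℓ (by norm_num) hn43 hl (by exact_mod_cast h)
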